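/- Let S be a feasible schedule for a PFB instance and let σ be an earliest release date ordering of the jobs. Then there exists a feasible permutation schedule Ŝ ordered by σ such that for every machine i ∈ {1,…,m} the multiset {c_{i,j}(Ŝ) : j ∈ {1,…,n}} equals the multiset {c_{i,j}(S) : j ∈ {1,…,n}}; in particular, the multiset of job completion times {C_j(Ŝ) : j} equals {C_j(S) : j}. -/

import Mathlib

/-- A PFB instance has `m+1` machines (indexed by `Fin (m+1)`, so at least one) and
`n+1` jobs (indexed by `Fin (n+1)`, so at least one). `p i` is the processing time of
machine `i`, `b i` its maximum batch size, `r j` the release date of job `j`.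
A schedule `c` assigns to machine `i` and job `j` the completion time `c i j`.
`Feasible p b r c` says: (i) each job finishes on the first machine no earlier than its
release date plus `p 0`; (ii) consecutive machines leave enough processing time;
(iii) two jobs with different completion times on a machine differ by at least the
processing time (jobs with equal completion time form one batch); (iv) at most `b i`
jobs complete at any given time on machine `i`. -/
def Feasible {m n : ℕ} (p b : Fin (m + 1) → ℕ) (r : Fin (n + 1) → ℕ)
    (c : Fin (m + 1) → Fin (n + 1) → ℕ) : Prop :=
  (∀ j, r j + p 0 ≤ c 0 j) ∧
  (∀ (i : Fin m) (j : Fin (n + 1)), c i.castSucc j + p i.succ ≤ c i.succ j) ∧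
  (∀ (i : Fin (m + 1)) (j j' : Fin (n + 1)),
      c i j ≠ c i j' → c i j + p i ≤ c i j' ∨ c i j' + p i ≤ c i j) ∧
  (∀ (i : Fin (m + 1)) (t : ℕ),
      (Finset.univ.filter (fun j => c i j = t)).card ≤ b i)

/-- `c` is a permutation schedule ordered by the permutation `σ`:
on every machine the completion times are nondecreasing along `σ`. -/
def OrderedBy {m n : ℕ} (c : Fin (m + 1) → Fin (n + 1) → ℕ)
    (σ : Equiv.Perm (Fin (n + 1))) : Prop :=
  ∀ i : Fin (m + 1), Monotone fun j => c i (σ j)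

/-- If at least `l.length - k` elements of a sorted list are `≥ B`,
then the `k`-th element is `≥ B`. -/
lemma sorted_get_ge (l : List ℕ) (hs : l.Pairwise (· ≤ ·)) (k : ℕ) (hk : k < l.length)
    (B : ℕ) (h : l.length ≤ k + Multiset.card ((↑l : Multiset ℕ).filter (fun x => B ≤ x))) :
    B ≤ l.get ⟨k, hk⟩ := by
  by_contra hlt
  push_neg at hlt
  have hlt' : l[k]'hk < B := hlt
  have htake : ∀ x ∈ l.take (k+1), (fun x => decide (¬ B ≤ x)) x = true := by
    intro x hx
    rw [List.mem_take_iff_getElem] at hx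
    obtain ⟨i, hi, rfl⟩ := hx
    have hik : i ≤ k := by omega
    have hmono : l.get ⟨i, by omega⟩ ≤ l.get ⟨k, hk⟩ := hs.rel_get_of_le (by exact hik)
    simp only [List.get_eq_getElem] at hmono
    simp only [decide_eq_true_eq]
    omega
  have hsub := (List.Sublist.filter (fun x => decide (¬ B ≤ x))
    (List.take_sublist (k+1) l)).length_le
  rw [List.filter_eq_self.mpr htake] at hsub
  have htlen : (l.take (k+1)).length = k + 1 := by rw [List.length_take]; omega
  rw [htlen] at hsub
  have hadd := congrArg Multiset.card
    (Multiset.filter_add_not (fun x => B ≤ x) (↑l : Multiset ℕ))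
  rw [Multiset.card_add] at hadd
  have h1 : Multiset.card ((↑l : Multiset ℕ).filter (fun x => ¬ B ≤ x))
      = (l.filter (fun x => decide (¬ B ≤ x))).length := by
    rw [Multiset.filter_coe, Multiset.coe_card]
  have h2 : Multiset.card (↑l : Multiset ℕ) = l.length := Multiset.coe_card l
  omega

/-- At least `l.length - k` elements of a sorted list are `≥` the `k`-th element. -/
lemma sorted_count_ge (l : List ℕ) (hs : l.Pairwise (· ≤ ·)) (k : ℕ) (hk : k < l.length) :
    l.length - k ≤
      Multiset.card ((↑l : Multiset ℕ).filter (fun x => l.get ⟨k, hk⟩ ≤ x)) := by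
  set B := l.get ⟨k, hk⟩ with hB
  have hdrop : ∀ x ∈ l.drop k, (fun x => decide (B ≤ x)) x = true := by
    intro x hx
    rw [List.mem_iff_getElem] at hx
    obtain ⟨i, hi, rfl⟩ := hx
    rw [List.getElem_drop]
    have hlt : k + i < l.length := by rw [List.length_drop] at hi; omega
    have hmono := hs.rel_get_of_le (show (⟨k, hk⟩ : Fin l.length) ≤ ⟨k + i, hlt⟩
      from Nat.le_add_right _ _)
    simp only [List.get_eq_getElem] at hmono
    simp only [decide_eq_true_eq]
    exact hmono
  have hsub := (List.Sublist.filter (fun x => decide (B ≤ x))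
    (List.drop_sublist k l)).length_le
  rw [List.filter_eq_self.mpr hdrop] at hsub
  rw [List.length_drop] at hsub
  have h1 : Multiset.card ((↑l : Multiset ℕ).filter (fun x => B ≤ x))
      = (l.filter (fun x => decide (B ≤ x))).length := by
    rw [Multiset.filter_coe, Multiset.coe_card]
  omega

lemma ofFn_get_cast {α : Type*} (l : List α) {N : ℕ} (h : l.length = N) :
    List.ofFn (fun k : Fin N => l.get (Fin.cast h.symm k)) = l := by
  subst h; simpa using List.ofFn_get l

/-- for any feasible schedule `c` and any earliest release date ordering
`σ`, there is a feasible permutation schedule ordered by `σ` whose multiset of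
completion times on every machine (in particular on the last machine) coincides with
that of `c`. -/
theorem stmt0 {m n : ℕ} (p b : Fin (m + 1) → ℕ) (r : Fin (n + 1) → ℕ)
    (hp : ∀ i, 1 ≤ p i) (hb : ∀ i, 1 ≤ b i ∧ b i ≤ n + 1)
    (c : Fin (m + 1) → Fin (n + 1) → ℕ) (hc : Feasible p b r c)
    (σ : Equiv.Perm (Fin (n + 1))) (hσ : Monotone fun j => r (σ j)) :
    ∃ chat : Fin (m + 1) → Fin (n + 1) → ℕ,
      Feasible p b r chat ∧ OrderedBy chat σ ∧
      ∀ i : Fin (m + 1),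
        (Finset.univ.val.map fun j => chat i j) =
          (Finset.univ.val.map fun j => c i j) := by
  classical
  obtain ⟨hc1, hc2, hc3, hc4⟩ := hc
  set M : Fin (m + 1) → Multiset ℕ := fun i => Finset.univ.val.map (c i) with hM
  set L : Fin (m + 1) → List ℕ := fun i => (M i).sort (· ≤ ·) with hL
  have hlen : ∀ i, (L i).length = n + 1 := by
    intro i
    simp [hL, hM, Multiset.length_sort]
  have hsort : ∀ i, (L i).Pairwise (· ≤ ·) := fun i => Multiset.pairwise_sort _ _
  have hLM : ∀ i, (↑(L i) : Multiset ℕ) = M i := fun i => Multiset.sort_eq _ _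
  set chat : Fin (m + 1) → Fin (n + 1) → ℕ :=
    fun i j => (L i).get (Fin.cast (hlen i).symm (σ.symm j)) with hchat
  -- multiset equality on each machine
  have hmeq : ∀ i, (Finset.univ.val.map fun j => chat i j) = M i := by
    intro i
    have heq : (Finset.univ.val.map fun j => chat i j)
        = Finset.univ.val.map ((fun k : Fin (n+1) => (L i).get (Fin.cast (hlen i).symm k))
            ∘ σ.symm) := rfl
    rw [heq, ← Multiset.map_map]
    have huniv : Finset.univ.val.map (σ.symm : Fin (n+1) → Fin (n+1)) = Finset.univ.val := by
      have h := Finset.map_univ_equiv σ.symm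
      calc Finset.univ.val.map (σ.symm : Fin (n+1) → Fin (n+1))
          = (Finset.univ.map σ.symm.toEmbedding).val := rfl
        _ = Finset.univ.val := by rw [h]
    rw [huniv, Fin.univ_val_map, ofFn_get_cast (L i) (hlen i), hLM i]
  -- counting: multiset-filter card = finset-filter card on jobs
  have hcount : ∀ (i : Fin (m+1)) (pred : ℕ → Prop) [DecidablePred pred],
      Multiset.card ((M i).filter pred)
        = (Finset.univ.filter (fun j => pred (c i j))).card := by
    intro i pred _
    rw [hM]
    rw [← Multiset.countP_eq_card_filter, Multiset.countP_map,
      Finset.card_def, Finset.filter_val, ← Multiset.countP_eq_card_filter]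
  have hchatσ : ∀ (i : Fin (m+1)) (k : Fin (n+1)),
      chat i (σ k) = (L i).get (Fin.cast (hlen i).symm k) := by
    intro i k; simp [hchat]
  refine ⟨chat, ⟨?_, ?_, ?_, ?_⟩, ?_, ?_⟩
  · -- (i) release dates
    intro j
    obtain ⟨k, rfl⟩ : ∃ k, σ k = j := ⟨σ.symm j, σ.apply_symm_apply j⟩
    rw [hchatσ]
    set B := r (σ k) + p 0 with hB
    have key := sorted_get_ge (L 0) (hsort 0) (k : ℕ) (by rw [hlen]; omega) B ?_
    · exact key
    rw [hLM, hcount 0 (fun x => B ≤ x)]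
    have hsubset : (Finset.Ici k).map σ.toEmbedding
        ⊆ Finset.univ.filter (fun j => B ≤ c 0 j) := by
      intro x hx
      simp only [Finset.mem_map, Finset.mem_Ici] at hx
      obtain ⟨k', hk', rfl⟩ := hx
      simp only [Finset.mem_filter, Finset.mem_univ, true_and]
      have h1 : r (σ k) ≤ r (σ k') := hσ hk'
      have h2 := hc1 (σ k')
      simp only [Equiv.coe_toEmbedding]
      omega
    have hcard := Finset.card_le_card hsubset
    rw [Finset.card_map, Fin.card_Ici] at hcard
    have hkn : (k : ℕ) ≤ n := by omega
    rw [hlen]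
    omega
  · -- (ii) consecutive machines
    intro i j
    obtain ⟨k, rfl⟩ : ∃ k, σ k = j := ⟨σ.symm j, σ.apply_symm_apply j⟩
    rw [hchatσ, hchatσ]
    have hk1 : (k : ℕ) < (L i.castSucc).length := by rw [hlen]; omega
    have hk2 : (k : ℕ) < (L i.succ).length := by rw [hlen]; omega
    set v := (L i.castSucc).get ⟨(k : ℕ), hk1⟩ with hv
    set B := v + p i.succ with hB
    have key := sorted_get_ge (L i.succ) (hsort i.succ) (k : ℕ) hk2 B ?_
    · exact key
    rw [hLM, hcount i.succ (fun x => B ≤ x)]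
    have hstep1 := sorted_count_ge (L i.castSucc) (hsort i.castSucc) (k : ℕ) hk1
    rw [hLM, hcount i.castSucc] at hstep1
    rw [← hv] at hstep1
    have hlen1 : (L i.castSucc).length = n + 1 := hlen _
    rw [hlen1] at hstep1
    have hsubset : Finset.univ.filter (fun j => v ≤ c i.castSucc j)
        ⊆ Finset.univ.filter (fun j => B ≤ c i.succ j) := by
      intro x hx
      simp only [Finset.mem_filter, Finset.mem_univ, true_and] at hx ⊢
      have h2 := hc2 i x
      omega
    have hcard := Finset.card_le_card hsubset
    have hlen2 : (L i.succ).length = n + 1 := hlen _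
    rw [hlen2]
    have hkn : (k : ℕ) ≤ n := by omega
    omega
  · -- (iii) batching gaps
    intro i j j' hne
    have hmem : ∀ x : Fin (n+1), ∃ j₀, c i j₀ = chat i x := by
      intro x
      have h0 : chat i x ∈ L i := List.get_mem _ _
      have h1 : chat i x ∈ (↑(L i) : Multiset ℕ) := Multiset.mem_coe.mpr h0
      rw [hLM, hM] at h1
      simpa using (Multiset.mem_map.mp h1).imp (fun _ h => h.2)
    obtain ⟨j₀, hj₀⟩ := hmem j
    obtain ⟨j₀', hj₀'⟩ := hmem j'
    rw [← hj₀, ← hj₀'] at hne ⊢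
    exact hc3 i j₀ j₀' hne
  · -- (iv) batch sizes
    intro i t
    have heq : (Finset.univ.filter (fun j => chat i j = t)).card
        = (Finset.univ.filter (fun j => c i j = t)).card := by
      have e1 : (Finset.univ.filter (fun j => chat i j = t)).card
          = Multiset.card ((Finset.univ.val.map fun j => chat i j).filter (fun x => x = t)) := by
        rw [← Multiset.countP_eq_card_filter, Multiset.countP_map,
          Finset.card_def, Finset.filter_val, ← Multiset.countP_eq_card_filter]
      rw [e1, hmeq i, hcount i (fun x => x = t)]
    rw [heq]
    exact hc4 i t
  · -- OrderedBy
    intro i a b' hab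
    simp only [hchatσ]
    exact (hsort i).rel_get_of_le (by simpa using hab)
  · -- multiset equality
    intro i
    rw [hmeq i, hM]
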